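/- Let h > 0 be a real number, N ≥ 1 a natural number, and p ≥ 3 a real number. Let u : ℤ → ℝ satisfy u_k ≥ 0 and u_k ≤ u_{k+1} for all k ∈ ℤ. If for every integer k with 0 ≤ k ≤ N−1 one has (u_{k+2} − u_{k+1})/h ≥ (p−2)·((k+2)·h)^{p−3}, then h·Σ_{k=0}^{N−1} u_{k+1}^p − (h·Σ_{k=0}^{N−1} u_{k−1})^{p−1} ≥ u_1^{p−2}·(u_1 − (p−1)·h^{p−2}) · h·Σ_{k=0}^{N−1} u_{k−1}. -/

import Mathlib

open Real Finset

lemma rpow_lower_aux {q a b : ℝ} (hq : 1 ≤ q) (ha : 0 ≤ a) (hab : a ≤ b) :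
    a ^ q + q * a ^ (q - 1) * (b - a) ≤ b ^ q := by
  rcases eq_or_lt_of_le ha with rfl | ha'
  · rcases eq_or_lt_of_le hq with rfl | hq'
    · simp
    · rw [Real.zero_rpow (by linarith : q ≠ 0),
        Real.zero_rpow (by intro hc; rw [sub_eq_zero] at hc; exact hq'.ne hc.symm)]
      simpa using Real.rpow_nonneg hab q
  · have hb : 0 < b := lt_of_lt_of_le ha' hab
    have hs : (-1:ℝ) ≤ (b - a) / a := by
      have : (0:ℝ) ≤ (b - a) / a := div_nonneg (by linarith) ha'.le
      linarith
    have hber := one_add_mul_self_le_rpow_one_add hs hq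
    have hba : 1 + (b - a) / a = b / a := by field_simp; ring
    rw [hba, Real.div_rpow hb.le ha'.le] at hber
    have haq : 0 < a ^ q := Real.rpow_pos_of_pos ha' q
    have hsub : a ^ (q - 1) = a ^ q / a := Real.rpow_sub_one ha'.ne' q
    rw [hsub]
    calc a ^ q + q * (a ^ q / a) * (b - a)
        = a ^ q * (1 + q * ((b - a) / a)) := by field_simp
      _ ≤ a ^ q * (b ^ q / a ^ q) := mul_le_mul_of_nonneg_left hber haq.le
      _ = b ^ q := by field_simp

lemma rpow_upper_aux {q a b : ℝ} (hq : 1 ≤ q) (ha : 0 ≤ a) (hab : a ≤ b) :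
    b ^ q ≤ a ^ q + q * b ^ (q - 1) * (b - a) := by
  rcases eq_or_lt_of_le (ha.trans hab) with rfl | hb'
  · have : a = 0 := le_antisymm hab ha
    subst this
    simp
  · have hs : (-1:ℝ) ≤ (a - b) / b := by
      have h1 : (a - b) / b = a / b - 1 := by field_simp
      have h2 : 0 ≤ a / b := div_nonneg ha hb'.le
      linarith
    have hber := one_add_mul_self_le_rpow_one_add hs hq
    have hba : 1 + (a - b) / b = a / b := by field_simp; ring
    rw [hba, Real.div_rpow ha hb'.le] at hber
    have hbq : 0 < b ^ q := Real.rpow_pos_of_pos hb' q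
    have hsub : b ^ (q - 1) = b ^ q / b := Real.rpow_sub_one hb'.ne' q
    rw [hsub]
    have := mul_le_mul_of_nonneg_left hber hbq.le
    have heq : b ^ q * (1 + q * ((a - b) / b)) = b ^ q - q * (b ^ q / b) * (b - a) := by
      field_simp; ring
    have heq2 : b ^ q * (a ^ q / b ^ q) = a ^ q := by field_simp
    rw [heq, heq2] at this
    linarith

set_option maxHeartbeats 1600000 in
theorem qi_time_scale_hZ_thm35
    (h : ℝ) (hh : 0 < h) (N : ℕ) (hN : 1 ≤ N) (p : ℝ) (hp : 3 ≤ p)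
    (u : ℤ → ℝ)
    (hnonneg : ∀ k : ℤ, 0 ≤ u k)
    (hmono : ∀ k : ℤ, u k ≤ u (k + 1))
    (hyp : ∀ k : ℤ, 0 ≤ k → k ≤ (N : ℤ) - 1 →
      (p - 2) * (((k : ℝ) + 2) * h) ^ (p - 3) ≤ (u (k + 2) - u (k + 1)) / h) :
    h * ∑ k ∈ Finset.range N, u ((k : ℤ) + 1) ^ p -
        (h * ∑ k ∈ Finset.range N, u ((k : ℤ) - 1)) ^ (p - 1) ≥
      u 1 ^ (p - 2) * (u 1 - (p - 1) * h ^ (p - 2)) *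
        (h * ∑ k ∈ Finset.range N, u ((k : ℤ) - 1)) := by
  -- monotonicity over ℤ
  have umono : ∀ i j : ℤ, i ≤ j → u i ≤ u j := by
    have key : ∀ (i : ℤ) (n : ℕ), u i ≤ u (i + n) := by
      intro i n
      induction n with
      | zero => simp
      | succ m ih =>
        have h2 : u (i + m) ≤ u (i + m + 1) := hmono _
        have h3 : i + (m : ℤ) + 1 = i + ((m + 1 : ℕ) : ℤ) := by push_cast; ring
        rw [h3] at h2
        exact ih.trans h2
    intro i j hij
    obtain ⟨n, rfl⟩ := Int.le.dest hij
    exact key i n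
  set C := u 1 ^ (p - 2) * (u 1 - (p - 1) * h ^ (p - 2)) with hC
  set A : ℕ → ℝ := fun n => h * ∑ k ∈ Finset.range n, u ((k : ℤ) - 1) with hA
  have hAstep : ∀ n : ℕ, A (n + 1) = A n + h * u ((n : ℤ) - 1) := by
    intro n
    simp only [hA, Finset.sum_range_succ]
    ring
  have hAnonneg : ∀ n : ℕ, 0 ≤ A n := by
    intro n
    exact mul_nonneg hh.le (Finset.sum_nonneg fun k _ => hnonneg _)
  have hAle : ∀ n : ℕ, A (n + 1) ≤ ((n : ℝ) + 1) * h * u ((n : ℤ) - 1) := by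
    intro n
    have hsum : ∑ k ∈ Finset.range (n + 1), u ((k : ℤ) - 1)
        ≤ ∑ _k ∈ Finset.range (n + 1), u ((n : ℤ) - 1) := by
      apply Finset.sum_le_sum
      intro k hk
      apply umono
      have := Finset.mem_range.mp hk
      omega
    have : A (n + 1) ≤ h * ((n + 1 : ℕ) * u ((n : ℤ) - 1)) := by
      simp only [hA]
      apply mul_le_mul_of_nonneg_left _ hh.le
      simpa using hsum
    calc A (n + 1) ≤ h * ((n + 1 : ℕ) * u ((n : ℤ) - 1)) := this
      _ = ((n : ℝ) + 1) * h * u ((n : ℤ) - 1) := by push_cast; ring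
  -- exponent facts
  have hp3 : (0:ℝ) ≤ p - 3 := by linarith
  have hp2 : (1:ℝ) ≤ p - 2 := by linarith
  have hp1 : (1:ℝ) ≤ p - 1 := by linarith
  -- phi
  set phi : ℕ → ℝ :=
    fun n => u ((n : ℤ) + 1) ^ (p - 1) - (p - 1) * (A (n + 1)) ^ (p - 2) - C with hphi
  have phi_nonneg : ∀ n : ℕ, (n : ℤ) ≤ (N : ℤ) - 1 → 0 ≤ phi n := by
    intro n
    induction n with
    | zero =>
      intro _
      have hA1 : A 1 = h * u (-1) := by simp [hA]
      have hu1 : (0:ℝ) ≤ u 1 := hnonneg 1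
      have h1 : (A 1) ^ (p - 2) ≤ h ^ (p - 2) * u 1 ^ (p - 2) := by
        rw [hA1, Real.mul_rpow hh.le (hnonneg _)]
        apply mul_le_mul_of_nonneg_left _ (Real.rpow_nonneg hh.le _)
        exact Real.rpow_le_rpow (hnonneg _) (umono (-1) 1 (by norm_num)) (by linarith)
      have h2 : u 1 ^ (p - 1) = u 1 ^ (p - 2) * u 1 := by
        have : p - 1 = (p - 2) + 1 := by ring
        rw [this, Real.rpow_add_of_nonneg hu1 (by linarith) zero_le_one, Real.rpow_one]
      have h3 : (p - 1) * (A 1) ^ (p - 2) ≤ (p - 1) * (h ^ (p - 2) * u 1 ^ (p - 2)) :=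
        mul_le_mul_of_nonneg_left h1 (by linarith)
      simp only [hphi, hC]
      push_cast
      nlinarith [h2, h3]
    | succ m ih =>
      intro hm
      have hm' : (m : ℤ) ≤ (N : ℤ) - 1 := by push_cast at hm ⊢; omega
      have ihm := ih hm'
      -- show phi (m+1) ≥ phi m
      have hyp_m := hyp m (Int.ofNat_nonneg m) hm'
      have hd : h * ((p - 2) * (((m : ℝ) + 2) * h) ^ (p - 3))
          ≤ u ((m : ℤ) + 2) - u ((m : ℤ) + 1) := by
        have := mul_le_mul_of_nonneg_left hyp_m hh.le
        calc h * ((p - 2) * (((m : ℝ) + 2) * h) ^ (p - 3))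
            ≤ h * ((u ((m : ℤ) + 2) - u ((m : ℤ) + 1)) / h) := this
          _ = u ((m : ℤ) + 2) - u ((m : ℤ) + 1) := by field_simp
      -- lower bound on rpow difference for u
      have hub : u ((m : ℤ) + 1) ≤ u ((m : ℤ) + 2) := umono _ _ (by omega)
      have hlow := rpow_lower_aux hp1 (hnonneg ((m : ℤ) + 1)) hub
      -- (p-1) = q, q - 1 = p - 2
      have hq1 : p - 1 - 1 = p - 2 := by ring
      rw [hq1] at hlow
      -- upper bound on A rpow difference
      have hAle' : A (m + 1) ≤ A (m + 2) := by
        rw [hAstep (m + 1)]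
        have : 0 ≤ h * u (((m : ℕ) + 1 : ℕ) - 1 : ℤ) := mul_nonneg hh.le (hnonneg _)
        linarith
      have hupp := rpow_upper_aux hp2 (hAnonneg (m + 1)) hAle'
      have hq2 : p - 2 - 1 = p - 3 := by ring
      rw [hq2] at hupp
      -- A (m+2) - A (m+1) = h * u m
      have hAd : A (m + 2) - A (m + 1) = h * u (m : ℤ) := by
        rw [hAstep (m + 1)]
        have : (((m : ℕ) + 1 : ℕ) : ℤ) - 1 = (m : ℤ) := by push_cast; ring
        rw [this]; ring
      -- A (m+2) ^ (p-3) ≤ ((m+2)*h)^(p-3) * (u m)^(p-3)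
      have hAb : A (m + 2) ≤ ((m : ℝ) + 2) * h * u (m : ℤ) := by
        have := hAle (m + 1)
        have he : ((((m : ℕ) + 1 : ℕ) : ℝ) + 1) = (m : ℝ) + 2 := by push_cast; ring
        have he2 : (((m : ℕ) + 1 : ℕ) : ℤ) - 1 = (m : ℤ) := by push_cast; ring
        rw [he, he2] at this
        exact this
      have hmh : (0:ℝ) ≤ ((m : ℝ) + 2) * h := by positivity
      have hA3 : (A (m + 2)) ^ (p - 3)
          ≤ (((m : ℝ) + 2) * h) ^ (p - 3) * (u (m : ℤ)) ^ (p - 3) := by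
        calc (A (m + 2)) ^ (p - 3) ≤ (((m : ℝ) + 2) * h * u (m : ℤ)) ^ (p - 3) :=
              Real.rpow_le_rpow (hAnonneg _) hAb hp3
          _ = (((m : ℝ) + 2) * h) ^ (p - 3) * (u (m : ℤ)) ^ (p - 3) :=
              Real.mul_rpow hmh (hnonneg _)
      -- u m ^ (p-3) * u m = u m ^ (p-2) ≤ u (m+1) ^ (p-2)
      have hum : (u (m : ℤ)) ^ (p - 3) * u (m : ℤ) = (u (m : ℤ)) ^ (p - 2) := by
        have : p - 2 = (p - 3) + 1 := by ring
        rw [this, Real.rpow_add_of_nonneg (hnonneg _) hp3 zero_le_one, Real.rpow_one]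
      have hum2 : (u (m : ℤ)) ^ (p - 2) ≤ (u ((m : ℤ) + 1)) ^ (p - 2) :=
        Real.rpow_le_rpow (hnonneg _) (umono _ _ (by omega)) (by linarith)
      -- chain it all together
      have key : (p - 1) * ((A (m + 2)) ^ (p - 2) - (A (m + 1)) ^ (p - 2))
          ≤ (u ((m : ℤ) + 2)) ^ (p - 1) - (u ((m : ℤ) + 1)) ^ (p - 1) := by
        have s1 : (A (m + 2)) ^ (p - 2) - (A (m + 1)) ^ (p - 2)
            ≤ (p - 2) * (A (m + 2)) ^ (p - 3) * (h * u (m : ℤ)) := by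
          rw [← hAd]; linarith [hupp]
        have s2 : (p - 2) * (A (m + 2)) ^ (p - 3) * (h * u (m : ℤ))
            ≤ (p - 2) * ((((m : ℝ) + 2) * h) ^ (p - 3) * (u (m : ℤ)) ^ (p - 3)) *
              (h * u (m : ℤ)) := by
          apply mul_le_mul_of_nonneg_right _ (mul_nonneg hh.le (hnonneg _))
          exact mul_le_mul_of_nonneg_left hA3 (by linarith)
        have s3 : (p - 2) * ((((m : ℝ) + 2) * h) ^ (p - 3) * (u (m : ℤ)) ^ (p - 3)) *
              (h * u (m : ℤ))
            = h * ((p - 2) * (((m : ℝ) + 2) * h) ^ (p - 3)) * ((u (m : ℤ)) ^ (p - 2)) := by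
          rw [← hum]; ring
        have s4 : h * ((p - 2) * (((m : ℝ) + 2) * h) ^ (p - 3)) * ((u (m : ℤ)) ^ (p - 2))
            ≤ h * ((p - 2) * (((m : ℝ) + 2) * h) ^ (p - 3)) * ((u ((m : ℤ) + 1)) ^ (p - 2)) := by
          apply mul_le_mul_of_nonneg_left hum2
          apply mul_nonneg hh.le
          apply mul_nonneg (by linarith) (Real.rpow_nonneg hmh _)
        have s5 : h * ((p - 2) * (((m : ℝ) + 2) * h) ^ (p - 3)) * ((u ((m : ℤ) + 1)) ^ (p - 2))
            ≤ (u ((m : ℤ) + 2) - u ((m : ℤ) + 1)) * ((u ((m : ℤ) + 1)) ^ (p - 2)) :=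
          mul_le_mul_of_nonneg_right hd (Real.rpow_nonneg (hnonneg _) _)
        have s6 : (p - 1) * ((u ((m : ℤ) + 1)) ^ (p - 2)) *
              (u ((m : ℤ) + 2) - u ((m : ℤ) + 1))
            ≤ (u ((m : ℤ) + 2)) ^ (p - 1) - (u ((m : ℤ) + 1)) ^ (p - 1) := by
          linarith [hlow]
        have hpos : 0 ≤ u ((m : ℤ) + 2) - u ((m : ℤ) + 1) := by linarith [hub]
        nlinarith [s1, s2, s3, s4, s5, s6, Real.rpow_nonneg (hnonneg ((m : ℤ) + 1)) (p - 2),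
          mul_le_mul_of_nonneg_left (s4.trans s5) (by linarith : (0:ℝ) ≤ p - 1)]
      -- translate phi (m+1) ≥ phi m
      have hcast1 : ((m + 1 : ℕ) : ℤ) + 1 = (m : ℤ) + 2 := by push_cast; ring
      have : phi m ≤ phi (m + 1) := by
        simp only [hphi, hcast1]
        linarith [key]
      linarith [ihm]
  -- main induction
  have main : ∀ n : ℕ, n ≤ N →
      0 ≤ h * ∑ k ∈ Finset.range n, u ((k : ℤ) + 1) ^ p - (A n) ^ (p - 1) - C * A n := by
    intro n
    induction n with
    | zero =>
      intro _
      have : A 0 = 0 := by simp [hA]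
      rw [this, Real.zero_rpow (by linarith : p - 1 ≠ 0)]
      simp
    | succ m ih =>
      intro hm
      have hm' : m ≤ N := by omega
      have ihm := ih hm'
      have hphi_m : 0 ≤ phi m := phi_nonneg m (by push_cast; omega)
      -- F (m+1) - F m ≥ h * u (m-1) * phi m
      have hAmono : A m ≤ A (m + 1) := by
        have h0 : 0 ≤ h * u ((m : ℤ) - 1) := mul_nonneg hh.le (hnonneg _)
        rw [hAstep m]; linarith
      have hupp := rpow_upper_aux hp1 (hAnonneg m) hAmono
      have hq1 : p - 1 - 1 = p - 2 := by ring
      rw [hq1] at hupp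
      have hAd : A (m + 1) - A m = h * u ((m : ℤ) - 1) := by rw [hAstep m]; ring
      have hup : (u ((m : ℤ) - 1)) * (u ((m : ℤ) + 1)) ^ (p - 1) ≤ (u ((m : ℤ) + 1)) ^ p := by
        have hpe : p = (p - 1) + 1 := by ring
        have : (u ((m : ℤ) + 1)) ^ p = (u ((m : ℤ) + 1)) ^ (p - 1) * u ((m : ℤ) + 1) := by
          rw [hpe, Real.rpow_add_of_nonneg (hnonneg _) (by linarith) zero_le_one,
            Real.rpow_one]
          ring_nf
        rw [this]
        have := umono ((m : ℤ) - 1) ((m : ℤ) + 1) (by omega)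
        calc (u ((m : ℤ) - 1)) * (u ((m : ℤ) + 1)) ^ (p - 1)
            ≤ (u ((m : ℤ) + 1)) * (u ((m : ℤ) + 1)) ^ (p - 1) :=
              mul_le_mul_of_nonneg_right this (Real.rpow_nonneg (hnonneg _) _)
          _ = (u ((m : ℤ) + 1)) ^ (p - 1) * u ((m : ℤ) + 1) := by ring
      -- phi m ≥ 0 means u(m+1)^(p-1) ≥ (p-1) A(m+1)^(p-2) + C
      have hphi_expand : (p - 1) * (A (m + 1)) ^ (p - 2) + C ≤ (u ((m : ℤ) + 1)) ^ (p - 1) := by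
        simp only [hphi] at hphi_m
        linarith
      have humn : 0 ≤ u ((m : ℤ) - 1) := hnonneg _
      have step : h * (u ((m : ℤ) + 1)) ^ p - ((A (m + 1)) ^ (p - 1) - (A m) ^ (p - 1))
          - C * (h * u ((m : ℤ) - 1)) ≥ 0 := by
        have b1 : (A (m + 1)) ^ (p - 1) - (A m) ^ (p - 1)
            ≤ (p - 1) * (A (m + 1)) ^ (p - 2) * (h * u ((m : ℤ) - 1)) := by
          rw [← hAd]; linarith [hupp]
        have b2 : ((p - 1) * (A (m + 1)) ^ (p - 2) + C) * u ((m : ℤ) - 1)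
            ≤ (u ((m : ℤ) + 1)) ^ (p - 1) * u ((m : ℤ) - 1) :=
          mul_le_mul_of_nonneg_right hphi_expand humn
        nlinarith [hup, b1, b2, mul_le_mul_of_nonneg_left hup hh.le]
      have hsum : ∑ k ∈ Finset.range (m + 1), u ((k : ℤ) + 1) ^ p
          = (∑ k ∈ Finset.range m, u ((k : ℤ) + 1) ^ p) + u ((m : ℤ) + 1) ^ p :=
        Finset.sum_range_succ _ m
      rw [hsum]
      have hCsplit : C * A (m + 1) = C * A m + C * (h * u ((m : ℤ) - 1)) := by
        rw [hAstep m]; ring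
      have hdist : h * ((∑ k ∈ Finset.range m, u ((k : ℤ) + 1) ^ p) + u ((m : ℤ) + 1) ^ p)
          = h * (∑ k ∈ Finset.range m, u ((k : ℤ) + 1) ^ p) + h * u ((m : ℤ) + 1) ^ p := by
        ring
      linarith [ihm, step, hCsplit, hdist]
  have := main N le_rfl
  simp only [hA, hC] at this ⊢
  linarith [this]
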